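/- Let G be an infinite, locally finite, connected undirected graph with a geodesic γ = (v_i)_{i≥0} starting at v = v_0. Then for every n ≥ 1, σ_n(v) ≤ Σ_{L=0}^n Σ_{k=L}^n σ^B_k(v_L) · σ^B_{n-k}(v_L), where σ^B_k(u) denotes the number of backward extendable k-step SAWs from u. -/
import Mathlib


open Filter ENNReal

structure Dgraph where
  V : Type
  E : Type
  src : E → V
  tgt : E → V

namespace Dgraph

variable (G : Dgraph)

/-- Every vertex has finite in-degree and out-degree. -/
def LocallyFinite : Prop :=
  ∀ v : G.V, {e : G.E | G.src e = v}.Finite ∧ {e : G.E | G.tgt e = v}.Finite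

/-- There is a directed edge from `u` to `v`. -/
def Adj (u v : G.V) : Prop := ∃ e : G.E, G.src e = u ∧ G.tgt e = v

/-- Directed walks exist between any ordered pair of vertices. -/
def StronglyConnected : Prop := ∀ u v : G.V, Relation.ReflTransGen G.Adj u v

/-- An automorphism of a directed multigraph. -/
structure Aut where
  vmap : G.V ≃ G.V
  emap : G.E ≃ G.E
  src_eq : ∀ e, G.src (emap e) = vmap (G.src e)
  tgt_eq : ∀ e, G.tgt (emap e) = vmap (G.tgt e)

/-- `u` and `v` are in the same transitivity class. -/
def SameOrbit (u v : G.V) : Prop := ∃ φ : G.Aut, φ.vmap u = v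

/-- Finitely many transitivity classes. -/
def QuasiTransitive : Prop := ∃ S : Finset G.V, ∀ v : G.V, ∃ s ∈ S, G.SameOrbit s v

def VertexTransitive : Prop := ∀ u v : G.V, G.SameOrbit u v

/-- The orbit of `v` under the stabiliser of `u`. -/
def stabOrbit (u v : G.V) : Set G.V := {w | ∃ φ : G.Aut, φ.vmap u = u ∧ φ.vmap v = w}

/-- Unimodularity: the weight function is constant on transitivity classes,
equivalently `|stab(u)v| = |stab(v)u|` whenever `u, v` are in the same orbit. -/
def Unimodular : Prop := ∀ u v : G.V, G.SameOrbit u v →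
  Nat.card (G.stabOrbit u v) = Nat.card (G.stabOrbit v u)

/-- The edge-reversal of `G`. -/
def rev : Dgraph := ⟨G.V, G.E, G.tgt, G.src⟩

/-- Each edge has a reverse edge: `G` represents an undirected graph. -/
def Undirected : Prop := ∃ ι : G.E ≃ G.E, ∀ e : G.E,
  G.src (ι e) = G.tgt e ∧ G.tgt (ι e) = G.src e ∧ ι (ι e) = e

/-- An `n`-step self-avoiding walk starting at `v`, directed away from `v`. -/
@[ext]
structure SAW (n : ℕ) (v : G.V) where
  vs : Fin (n + 1) → G.V
  es : Fin n → G.E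
  hsrc : ∀ i : Fin n, G.src (es i) = vs i.castSucc
  htgt : ∀ i : Fin n, G.tgt (es i) = vs i.succ
  hstart : vs 0 = v
  hinj : Function.Injective vs

/-- `w` is an initial segment of a singly infinite SAW from `v`. -/
def IsFwdExt {n : ℕ} {v : G.V} (w : G.SAW n v) : Prop :=
  ∃ (vs : ℕ → G.V) (es : ℕ → G.E), Function.Injective vs ∧
    (∀ i : ℕ, G.src (es i) = vs i ∧ G.tgt (es i) = vs (i + 1)) ∧
    (∀ i : Fin (n + 1), vs i = w.vs i) ∧ (∀ i : Fin n, es i = w.es i)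

/-- `w` is the final segment of a singly infinite SAW from infinity ending at the
endpoint of `w` (indexed backwards from the endpoint). -/
def IsBwdExt {n : ℕ} {v : G.V} (w : G.SAW n v) : Prop :=
  ∃ (vs : ℕ → G.V) (es : ℕ → G.E), Function.Injective vs ∧
    (∀ i : ℕ, G.src (es i) = vs (i + 1) ∧ G.tgt (es i) = vs i) ∧
    (∀ i : Fin (n + 1), vs (n - (i : ℕ)) = w.vs i) ∧
    (∀ i : Fin n, es (n - 1 - (i : ℕ)) = w.es i)

/-- `w` is a sub-walk of a doubly infinite SAW. -/
def IsDblExt {n : ℕ} {v : G.V} (w : G.SAW n v) : Prop :=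
  ∃ (vs : ℤ → G.V) (es : ℤ → G.E), Function.Injective vs ∧
    (∀ i : ℤ, G.src (es i) = vs i ∧ G.tgt (es i) = vs (i + 1)) ∧
    ∃ k : ℤ, (∀ i : Fin (n + 1), vs (k + (i : ℕ)) = w.vs i) ∧
      (∀ i : Fin n, es (k + (i : ℕ)) = w.es i)

noncomputable def sigma (n : ℕ) (v : G.V) : ℕ := Nat.card (G.SAW n v)
noncomputable def sigmaF (n : ℕ) (v : G.V) : ℕ := Nat.card {w : G.SAW n v // G.IsFwdExt w}
noncomputable def sigmaB (n : ℕ) (v : G.V) : ℕ := Nat.card {w : G.SAW n v // G.IsBwdExt w}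
noncomputable def sigmaFB (n : ℕ) (v : G.V) : ℕ := Nat.card {w : G.SAW n v // G.IsDblExt w}

noncomputable def ssigma (n : ℕ) : ℝ≥0∞ := ⨆ v : G.V, (G.sigma n v : ℝ≥0∞)
noncomputable def ssigmaF (n : ℕ) : ℝ≥0∞ := ⨆ v : G.V, (G.sigmaF n v : ℝ≥0∞)
noncomputable def ssigmaB (n : ℕ) : ℝ≥0∞ := ⨆ v : G.V, (G.sigmaB n v : ℝ≥0∞)
noncomputable def ssigmaFB (n : ℕ) : ℝ≥0∞ := ⨆ v : G.V, (G.sigmaFB n v : ℝ≥0∞)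

/-- Undirected graph distance: length of a shortest path ignoring orientations. -/
noncomputable def udist (u v : G.V) : ℕ :=
  sInf {n : ℕ | ∃ f : Fin (n + 1) → G.V, f 0 = u ∧ f (Fin.last n) = v ∧
    ∀ i : Fin n, (∃ e, G.src e = f i.castSucc ∧ G.tgt e = f i.succ) ∨
      (∃ e, G.src e = f i.succ ∧ G.tgt e = f i.castSucc)}

end Dgraph

open Filter ENNReal

attribute [local instance] Classical.propDecidable


namespace Dgraph
variable (G : Dgraph)

/-- Initial segment of a SAW. -/
def SAW.init {n : ℕ} {v : G.V} (w : G.SAW (n+1) v) : G.SAW n v where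
  vs := w.vs ∘ Fin.castSucc
  es := w.es ∘ Fin.castSucc
  hsrc i := by simpa using w.hsrc i.castSucc
  htgt i := by
    have := w.htgt i.castSucc
    simp only [Function.comp_apply]
    rw [this]
    exact congrArg w.vs (by ext; simp)
  hstart := by simpa using w.hstart
  hinj := w.hinj.comp (Fin.castSucc_injective _)

lemma finite_SAW (hlf : G.LocallyFinite) : ∀ (n : ℕ) (v : G.V), Finite (G.SAW n v) := by
  intro n
  induction n with
  | zero =>
    intro v
    have : Subsingleton (G.SAW 0 v) := by
      constructor
      intro a b
      ext i
      · have h0 : ∀ j : Fin 1, j = 0 := by omega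
        rw [h0 i, a.hstart, b.hstart]
      · exact absurd i.2 (by omega)
    exact Finite.of_subsingleton
  | succ m ih =>
    intro v
    haveI : ∀ u, Finite (G.SAW m u) := fun u => ih u
    haveI : ∀ (w : G.SAW m v), Finite {e : G.E // G.src e = w.vs (Fin.last m)} := by
      intro w
      exact (hlf (w.vs (Fin.last m))).1.to_subtype
    set Φ : G.SAW (m+1) v → Σ w : G.SAW m v, {e : G.E // G.src e = w.vs (Fin.last m)} :=
      fun w => ⟨w.init, ⟨w.es (Fin.last m), by
        rw [w.hsrc (Fin.last m)]; rfl⟩⟩ with hΦ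
    apply Finite.of_injective Φ
    intro a b hab
    obtain ⟨h1, h2⟩ := Sigma.mk.inj_iff.mp hab
    have h2' : a.es (Fin.last m) = b.es (Fin.last m) := by
      exact (Subtype.heq_iff_coe_eq (fun x => by rw [h1])).mp h2
    ext i
    · rcases Fin.eq_castSucc_or_eq_last i with ⟨j, rfl⟩ | rfl
      · exact congrFun (congrArg SAW.vs h1) j
      · rw [show Fin.last (m+1) = (Fin.last m).succ from by ext; simp,
          ← a.htgt (Fin.last m), ← b.htgt (Fin.last m), h2']
    · rcases Fin.eq_castSucc_or_eq_last i with ⟨j, rfl⟩ | rfl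
      · exact congrFun (congrArg SAW.es h1) j
      · exact h2'

end Dgraph
namespace Dgraph
variable (G : Dgraph)

section Split

variable {n : ℕ} {v : G.V} (ι : G.E ≃ G.E)
  (hι : ∀ e : G.E, G.src (ι e) = G.tgt e ∧ G.tgt (ι e) = G.src e ∧ ι (ι e) = e)

/-- The reversed initial piece of `w` up to position `k`. -/
def splitNeg (w : G.SAW n v) (k : ℕ) (hk : k ≤ n) (u : G.V)
    (hu : w.vs ⟨k, by omega⟩ = u) : G.SAW k u where
  vs i := w.vs ⟨k - i.val, by omega⟩
  es i := ι (w.es ⟨k - 1 - i.val, by have := i.isLt; omega⟩)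
  hsrc i := by
    rw [(hι _).1, w.htgt]
    exact congrArg w.vs (Fin.ext (by have := i.isLt; simp; omega))
  htgt i := by
    rw [(hι _).2.1, w.hsrc]
    exact congrArg w.vs (Fin.ext (by have := i.isLt; simp; omega))
  hstart := by simpa using hu
  hinj := by
    intro i j h
    have h2 : k - (i : ℕ) = k - (j : ℕ) := congrArg Fin.val (w.hinj h)
    have hi := i.isLt; have hj := j.isLt
    exact Fin.ext (by omega)

/-- The final piece of `w` from position `k` on. -/
def splitPos (w : G.SAW n v) (k : ℕ) (hk : k ≤ n) (u : G.V)
    (hu : w.vs ⟨k, by omega⟩ = u) : G.SAW (n - k) u where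
  vs i := w.vs ⟨k + i.val, by have := i.isLt; omega⟩
  es i := w.es ⟨k + i.val, by have := i.isLt; omega⟩
  hsrc i := by
    rw [w.hsrc]
    exact congrArg w.vs (Fin.ext (by simp))
  htgt i := by
    rw [w.htgt]
    exact congrArg w.vs (Fin.ext (by simp; omega))
  hstart := by simpa using hu
  hinj := by
    intro i j h
    have h2 : k + (i : ℕ) = k + (j : ℕ) := congrArg Fin.val (w.hinj h)
    exact Fin.ext (by omega)

lemma split_reconstruct (w w' : G.SAW n v) (k : ℕ) (hk : k ≤ n) (u : G.V)
    (hu : w.vs ⟨k, by omega⟩ = u) (hu' : w'.vs ⟨k, by omega⟩ = u)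
    (h1 : G.splitNeg ι hι w k hk u hu = G.splitNeg ι hι w' k hk u hu')
    (h2 : G.splitPos w k hk u hu = G.splitPos w' k hk u hu') : w = w' := by
  ext i
  · by_cases hik : (i : ℕ) ≤ k
    · have e := congrFun (congrArg SAW.vs h1) ⟨k - (i : ℕ), by omega⟩
      have e' : w.vs ⟨k - (k - (i : ℕ)), by omega⟩ = w'.vs ⟨k - (k - (i : ℕ)), by omega⟩ := e
      have hidx : (⟨k - (k - (i : ℕ)), by omega⟩ : Fin (n + 1)) = i :=
        Fin.ext (by simp; omega)
      rw [← hidx]; exact e'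
    · have hi := i.isLt
      have e := congrFun (congrArg SAW.vs h2) ⟨(i : ℕ) - k, by omega⟩
      have e' : w.vs ⟨k + ((i : ℕ) - k), by omega⟩ = w'.vs ⟨k + ((i : ℕ) - k), by omega⟩ := e
      have hidx : (⟨k + ((i : ℕ) - k), by omega⟩ : Fin (n + 1)) = i :=
        Fin.ext (by simp; omega)
      rw [← hidx]; exact e'
  · by_cases hik : (i : ℕ) < k
    · have e := congrFun (congrArg SAW.es h1) ⟨k - 1 - (i : ℕ), by omega⟩
      have e' : ι (w.es ⟨k - 1 - (k - 1 - (i : ℕ)), by omega⟩)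
          = ι (w'.es ⟨k - 1 - (k - 1 - (i : ℕ)), by omega⟩) := e
      have e'' := ι.injective e'
      have hidx : (⟨k - 1 - (k - 1 - (i : ℕ)), by omega⟩ : Fin n) = i :=
        Fin.ext (by simp; omega)
      rw [← hidx]; exact e''
    · have hi := i.isLt
      have e := congrFun (congrArg SAW.es h2) ⟨(i : ℕ) - k, by omega⟩
      have e' : w.es ⟨k + ((i : ℕ) - k), by omega⟩ = w'.es ⟨k + ((i : ℕ) - k), by omega⟩ := e
      have hidx : (⟨k + ((i : ℕ) - k), by omega⟩ : Fin n) = i :=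
        Fin.ext (by simp; omega)
      rw [← hidx]; exact e'

variable (γ : ℕ → G.V)

lemma isBwdExt_splitNeg (hadj : ∀ i : ℕ, G.Adj (γ i) (γ (i + 1)))
    (hγinj : Function.Injective γ) (w : G.SAW n v) (k L : ℕ) (hk : k ≤ n)
    (hu : w.vs ⟨k, by omega⟩ = γ L)
    (hmax : ∀ i, L < i → γ i ∉ Set.range w.vs) :
    G.IsBwdExt (G.splitNeg ι hι w k hk (γ L) hu) := by
  classical
  refine ⟨fun j => if h : j ≤ k then w.vs ⟨j, by omega⟩ else γ (L + (j - k)),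
    fun j => if h : j < k then ι (w.es ⟨j, by omega⟩) else ι (hadj (L + (j - k))).choose,
    ?_, ?_, ?_, ?_⟩
  · intro a b h
    dsimp only at h
    by_cases ha : a ≤ k <;> by_cases hb : b ≤ k
    · rw [dif_pos ha, dif_pos hb] at h
      have := congrArg Fin.val (w.hinj h); simpa using this
    · rw [dif_pos ha, dif_neg hb] at h
      exact absurd ⟨⟨a, by omega⟩, h⟩ (hmax (L + (b - k)) (by omega))
    · rw [dif_neg ha, dif_pos hb] at h
      exact absurd ⟨⟨b, by omega⟩, h.symm⟩ (hmax (L + (a - k)) (by omega))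
    · rw [dif_neg ha, dif_neg hb] at h
      have := hγinj h; omega
  · intro i
    dsimp only
    by_cases hi : i < k
    · rw [dif_pos hi]
      constructor
      · rw [(hι _).1, w.htgt, dif_pos (by omega : i + 1 ≤ k)]
        exact congrArg w.vs (Fin.ext (by simp))
      · rw [(hι _).2.1, w.hsrc, dif_pos (by omega : i ≤ k)]
        exact congrArg w.vs (Fin.ext (by simp))
    · have hspec := (hadj (L + (i - k))).choose_spec
      rw [dif_neg hi]
      constructor
      · rw [(hι _).1, hspec.2, dif_neg (by omega : ¬ i + 1 ≤ k)]
        exact congrArg γ (by omega)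
      · rw [(hι _).2.1, hspec.1]
        by_cases hik : i ≤ k
        · have hik' : i = k := by omega
          subst hik'
          rw [dif_pos (le_refl i), show L + (i - i) = L from by omega]
          exact hu.symm
        · rw [dif_neg hik]
  · intro i
    have hi := i.isLt
    dsimp only
    rw [dif_pos (by omega : k - (i : ℕ) ≤ k)]
    exact congrArg w.vs (Fin.ext (by simp))
  · intro i
    have hi := i.isLt
    dsimp only
    rw [dif_pos (by omega : k - 1 - (i : ℕ) < k)]
    rfl

lemma isBwdExt_splitPos (ι : G.E ≃ G.E)
    (hι : ∀ e : G.E, G.src (ι e) = G.tgt e ∧ G.tgt (ι e) = G.src e ∧ ι (ι e) = e)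
    (hadj : ∀ i : ℕ, G.Adj (γ i) (γ (i + 1)))
    (hγinj : Function.Injective γ) (w : G.SAW n v) (k L : ℕ) (hk : k ≤ n)
    (hu : w.vs ⟨k, by omega⟩ = γ L)
    (hmax : ∀ i, L < i → γ i ∉ Set.range w.vs) :
    G.IsBwdExt (G.splitPos w k hk (γ L) hu) := by
  classical
  refine ⟨fun j => if h : j ≤ n - k then w.vs ⟨n - j, by omega⟩
      else γ (L + (j - (n - k))),
    fun j => if h : j < n - k then w.es ⟨n - 1 - j, by omega⟩
      else ι (hadj (L + (j - (n - k)))).choose,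
    ?_, ?_, ?_, ?_⟩
  · intro a b h
    dsimp only at h
    by_cases ha : a ≤ n - k <;> by_cases hb : b ≤ n - k
    · rw [dif_pos ha, dif_pos hb] at h
      have := congrArg Fin.val (w.hinj h); simp at this; omega
    · rw [dif_pos ha, dif_neg hb] at h
      exact absurd ⟨⟨n - a, by omega⟩, h⟩ (hmax (L + (b - (n - k))) (by omega))
    · rw [dif_neg ha, dif_pos hb] at h
      exact absurd ⟨⟨n - b, by omega⟩, h.symm⟩ (hmax (L + (a - (n - k))) (by omega))
    · rw [dif_neg ha, dif_neg hb] at h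
      have := hγinj h; omega
  · intro i
    dsimp only
    by_cases hi : i < n - k
    · rw [dif_pos hi]
      constructor
      · rw [w.hsrc, dif_pos (by omega : i + 1 ≤ n - k)]
        exact congrArg w.vs (Fin.ext (by simp; omega))
      · rw [w.htgt, dif_pos (by omega : i ≤ n - k)]
        exact congrArg w.vs (Fin.ext (by simp; omega))
    · have hspec := (hadj (L + (i - (n - k)))).choose_spec
      rw [dif_neg hi]
      constructor
      · rw [(hι _).1, hspec.2, dif_neg (by omega : ¬ i + 1 ≤ n - k)]
        exact congrArg γ (by omega)
      · rw [(hι _).2.1, hspec.1]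
        by_cases hik : i ≤ n - k
        · rw [dif_pos hik]
          have h1 : (⟨n - i, by omega⟩ : Fin (n + 1)) = ⟨k, by omega⟩ :=
            Fin.ext (by simp; omega)
          rw [h1, hu]
          exact congrArg γ (by omega)
        · rw [dif_neg hik]
  · intro i
    have hi := i.isLt
    dsimp only
    rw [dif_pos (by omega : n - k - (i : ℕ) ≤ n - k)]
    exact congrArg w.vs (Fin.ext (by simp; omega))
  · intro i
    have hi := i.isLt
    dsimp only
    rw [dif_pos (by omega : n - k - 1 - (i : ℕ) < n - k)]
    exact congrArg w.es (Fin.ext (by simp; omega))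

end Split
end Dgraph
namespace Dgraph
variable (G : Dgraph)

lemma udist_self (u : G.V) : G.udist u u = 0 := by
  refine Nat.eq_zero_of_le_zero ?_
  unfold Dgraph.udist
  refine Nat.sInf_le ?_
  refine ⟨fun _ => u, rfl, rfl, fun i => absurd i.isLt (by omega)⟩

lemma udist_le_of_SAW {n : ℕ} {v : G.V} (w : G.SAW n v) (j : Fin (n + 1)) :
    G.udist v (w.vs j) ≤ (j : ℕ) := by
  apply Nat.sInf_le
  refine ⟨fun t => w.vs ⟨t.val, by have := t.isLt; have := j.isLt; omega⟩, ?_, ?_, ?_⟩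
  · exact Eq.trans (congrArg w.vs (Fin.ext (by simp))) w.hstart
  · exact congrArg w.vs (Fin.ext (by simp))
  · intro t
    left
    have ht := t.isLt
    have hj := j.isLt
    refine ⟨w.es ⟨t.val, by omega⟩, ?_, ?_⟩
    · exact (w.hsrc _).trans (congrArg w.vs (Fin.ext (by simp)))
    · exact (w.htgt _).trans (congrArg w.vs (Fin.ext (by simp)))

end Dgraph
/-- decomposition of SAWs along a geodesic ray: if `γ` is a geodesic with
`γ 0 = v` then `σ_n(v) ≤ Σ_{L=0}^n Σ_{k=L}^n σ^B_k(γ L) · σ^B_{n-k}(γ L)`. -/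
theorem sigma_le_geodesic_decomposition (G : Dgraph) (hinf : Infinite G.V)
    (hlf : G.LocallyFinite) (hund : G.Undirected) (hsc : G.StronglyConnected)
    (γ : ℕ → G.V) (hadj : ∀ i : ℕ, G.Adj (γ i) (γ (i + 1)))
    (hgeo : ∀ i j : ℕ, G.udist (γ i) (γ j) = ((i : ℤ) - (j : ℤ)).natAbs)
    (n : ℕ) (hn : 1 ≤ n) :
    G.sigma n (γ 0) ≤ ∑ L ∈ Finset.range (n + 1), ∑ k ∈ Finset.Icc L n,
      G.sigmaB k (γ L) * G.sigmaB (n - k) (γ L) := by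
  classical
  obtain ⟨ι, hι⟩ := hund
  have hfin : ∀ (m : ℕ) (u : G.V), Finite (G.SAW m u) := G.finite_SAW hlf
  haveI : Fintype (G.SAW n (γ 0)) := @Fintype.ofFinite _ (hfin n (γ 0))
  have γinj : Function.Injective γ := by
    intro a b h
    have h2 := hgeo a b
    rw [h, G.udist_self] at h2
    omega
  have udist0 : ∀ i : ℕ, G.udist (γ 0) (γ i) = i := by
    intro i
    have := hgeo 0 i
    omega
  set P : G.SAW n (γ 0) → ℕ → Prop := fun w i => γ i ∈ Set.range w.vs with hPdef
  have hP0 : ∀ w, P w 0 := fun w => ⟨0, w.hstart⟩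
  have hPle : ∀ w i, P w i → i ≤ n := by
    rintro w i ⟨j, hj⟩
    have h1 : G.udist (γ 0) (w.vs j) ≤ (j : ℕ) := G.udist_le_of_SAW w j
    rw [hj, udist0] at h1
    have := j.isLt
    omega
  set Lf : G.SAW n (γ 0) → ℕ := fun w => Nat.findGreatest (P w) n with hLfdef
  have hPL : ∀ w, P w (Lf w) := fun w => Nat.findGreatest_spec (Nat.zero_le n) (hP0 w)
  have hLle : ∀ w, Lf w ≤ n := fun _ => Nat.findGreatest_le n
  have hmax : ∀ w i, Lf w < i → γ i ∉ Set.range w.vs := by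
    intro w i hLi hmem
    by_cases hin : i ≤ n
    · exact Nat.findGreatest_is_greatest hLi hin hmem
    · exact absurd (hPle w i hmem) hin
  set mf : G.SAW n (γ 0) → ℕ := fun w => ((hPL w).choose : Fin (n + 1)).val with hmfdef
  have hmlt : ∀ w, mf w < n + 1 := fun w => ((hPL w).choose).isLt
  have hmspec : ∀ w, w.vs ⟨mf w, hmlt w⟩ = γ (Lf w) := by
    intro w
    exact (congrArg w.vs (Fin.ext rfl)).trans (hPL w).choose_spec
  have hLm : ∀ w, Lf w ≤ mf w := by
    intro w
    have h1 : G.udist (γ 0) (w.vs ⟨mf w, hmlt w⟩) ≤ mf w := G.udist_le_of_SAW w _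
    rw [hmspec w, udist0] at h1
    exact h1
  set f : G.SAW n (γ 0) → Σ _ : ℕ, ℕ := fun w => ⟨Lf w, mf w⟩ with hfdef
  set B : Finset (Σ _ : ℕ, ℕ) := (Finset.range (n + 1)).sigma (fun L => Finset.Icc L n)
    with hBdef
  have hmem : ∀ w ∈ (Finset.univ : Finset (G.SAW n (γ 0))), f w ∈ B := by
    intro w _
    rw [hfdef]
    dsimp only
    rw [hBdef, Finset.mem_sigma, Finset.mem_range, Finset.mem_Icc]
    refine ⟨?_, ?_, ?_⟩ <;> dsimp only
    · have := hLle w; omega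
    · exact hLm w
    · have := hmlt w; omega
  have hcard := Finset.card_eq_sum_card_fiberwise hmem
  have hfiber : ∀ p ∈ B, (Finset.univ.filter (fun w => f w = p)).card
      ≤ G.sigmaB p.2 (γ p.1) * G.sigmaB (n - p.2) (γ p.1) := by
    rintro ⟨L, k⟩ hp
    rw [hBdef, Finset.mem_sigma, Finset.mem_range, Finset.mem_Icc] at hp
    have hkn : k ≤ n := hp.2.2
    have hLw : ∀ w : G.SAW n (γ 0), f w = ⟨L, k⟩ → Lf w = L ∧ mf w = k := by
      intro w hw
      obtain ⟨h1, h2⟩ := Sigma.mk.inj_iff.mp hw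
      exact ⟨h1, eq_of_heq h2⟩
    have hu : ∀ w : G.SAW n (γ 0), f w = ⟨L, k⟩ → w.vs ⟨k, by omega⟩ = γ L := by
      intro w hw
      obtain ⟨h1, h2⟩ := hLw w hw
      have h0 := hmspec w
      rw [show (⟨mf w, hmlt w⟩ : Fin (n + 1)) = ⟨k, by omega⟩ from Fin.ext h2, h1] at h0
      exact h0
    have hmax' : ∀ (w : G.SAW n (γ 0)), f w = ⟨L, k⟩ →
        ∀ i, L < i → γ i ∉ Set.range w.vs := by
      intro w hw i hi
      exact hmax w i (by rw [(hLw w hw).1]; exact hi)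
    haveI : Finite (G.SAW k (γ L)) := hfin k (γ L)
    haveI : Finite (G.SAW (n - k) (γ L)) := hfin (n - k) (γ L)
    set Ψ : {w : G.SAW n (γ 0) // f w = ⟨L, k⟩} →
        {u : G.SAW k (γ L) // G.IsBwdExt u} × {u : G.SAW (n - k) (γ L) // G.IsBwdExt u} :=
      fun wp => (⟨G.splitNeg ι hι wp.1 k hkn (γ L) (hu wp.1 wp.2),
          G.isBwdExt_splitNeg ι hι γ hadj γinj wp.1 k L hkn (hu wp.1 wp.2)
            (hmax' wp.1 wp.2)⟩,
        ⟨G.splitPos wp.1 k hkn (γ L) (hu wp.1 wp.2),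
          G.isBwdExt_splitPos γ ι hι hadj γinj wp.1 k L hkn (hu wp.1 wp.2)
            (hmax' wp.1 wp.2)⟩) with hΨdef
    have hΨinj : Function.Injective Ψ := by
      intro a b h
      rw [hΨdef] at h
      have h1 := congrArg (fun q => (q.1 : G.SAW k (γ L))) h
      have h2 := congrArg (fun q => (q.2 : G.SAW (n - k) (γ L))) h
      exact Subtype.ext (G.split_reconstruct ι hι a.1 b.1 k hkn (γ L)
        (hu a.1 a.2) (hu b.1 b.2) h1 h2)
    calc (Finset.univ.filter (fun w => f w = (⟨L, k⟩ : Σ _ : ℕ, ℕ))).card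
        = Nat.card {w : G.SAW n (γ 0) // f w = ⟨L, k⟩} := by
          rw [Nat.card_eq_fintype_card, Fintype.card_subtype]
      _ ≤ Nat.card ({u : G.SAW k (γ L) // G.IsBwdExt u}
            × {u : G.SAW (n - k) (γ L) // G.IsBwdExt u}) :=
          Nat.card_le_card_of_injective Ψ hΨinj
      _ = G.sigmaB k (γ L) * G.sigmaB (n - k) (γ L) := Nat.card_prod _ _
  calc G.sigma n (γ 0) = (Finset.univ : Finset (G.SAW n (γ 0))).card := by
        rw [Finset.card_univ]
        exact Nat.card_eq_fintype_card
    _ = ∑ p ∈ B, (Finset.univ.filter (fun w => f w = p)).card := hcard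
    _ ≤ ∑ p ∈ B, G.sigmaB p.2 (γ p.1) * G.sigmaB (n - p.2) (γ p.1) :=
        Finset.sum_le_sum hfiber
    _ = ∑ L ∈ Finset.range (n + 1), ∑ k ∈ Finset.Icc L n,
        G.sigmaB k (γ L) * G.sigmaB (n - k) (γ L) := by
      rw [hBdef]
      exact Finset.sum_sigma _ _ _
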